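/- arXiv:2106.11734 — 2 statements merged into one kernel-verified Lean document; each statement's English description precedes it below -/
import Mathlib

section
/- Let b ≥ β > 0 and let f : 𝔻 → ℝ be defined by f(r·e^{iθ}) = (1/(r(1−r)^{b−β}))·sin(1/(1−r)^b) for 1/2 ≤ r < 1 and f(r·e^{iθ}) = 1 for 0 ≤ r < 1/2. Then f satisfies the VWMO condition, and moreover there is a constant C > 0 such that |f̂(z)| ≤ C·(1−|z|)^β for all z ∈ 𝔻; in particular f̂(z) → 0 as |z| → 1. -/
open MeasureTheory Set

noncomputable section

/-- The normalized area measure on the plane: planar Lebesgue measure divided by `π`. -/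
def dA : Measure ℂ := (ENNReal.ofReal Real.pi)⁻¹ • volume

/-- The open unit disc `𝔻`. -/
def unitDisc : Set ℂ := {z : ℂ | ‖z‖ < 1}

/-- The argument `θ` of `z`, normalized to lie in `[0, 2π)`. -/
def theta (z : ℂ) : ℝ := toIcoMod Real.two_pi_pos 0 (Complex.arg z)

/-- The angle of `ζ`, normalized to lie in `[theta z, theta z + 2π)`;
for `ζ ∈ B(z)` this is the angle `θ̃ ∈ [θ, θ + π(1-r)]` of the paper's convention. -/
def angFrom (z ζ : ℂ) : ℝ := toIcoMod Real.two_pi_pos (theta z) (Complex.arg ζ)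

/-- The polar rectangle `{ρ e^{iφ} : r₁ ≤ ρ ≤ r₂, φ₁ ≤ φ ≤ φ₂}`. -/
def polarRect (r₁ r₂ φ₁ φ₂ : ℝ) : Set ℂ :=
  {w : ℂ | ∃ ρ φ : ℝ, r₁ ≤ ρ ∧ ρ ≤ r₂ ∧ φ₁ ≤ φ ∧ φ ≤ φ₂ ∧
    w = (ρ : ℂ) * Complex.exp ((φ : ℂ) * Complex.I)}

/-- The set `B(z)` for `z = r e^{iθ} ∈ 𝔻`. -/
def Bz (z : ℂ) : Set ℂ :=
  polarRect ‖z‖ (1 - (1 - ‖z‖) / 2) (theta z) (theta z + Real.pi * (1 - ‖z‖))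

/-- The set `B(z, ζ)` for `ζ ∈ B(z)`. -/
def Bzz (z ζ : ℂ) : Set ℂ := polarRect ‖z‖ ‖ζ‖ (theta z) (angFrom z ζ)

/-- The set `B(ζ₁, ζ₂)` for points `ζ₁ ≾ ζ₂` of `B(z)`. -/
def Bsub (z ζ₁ ζ₂ : ℂ) : Set ℂ := polarRect ‖ζ₁‖ ‖ζ₂‖ (angFrom z ζ₁) (angFrom z ζ₂)

/-- The relation `ζ₁ ≾ ζ₂` for points of `B(z)`: `ρ₁ ≤ ρ₂` and `φ₁ ≤ φ₂`. -/
def precSim (z ζ₁ ζ₂ : ℂ) : Prop := ‖ζ₁‖ ≤ ‖ζ₂‖ ∧ angFrom z ζ₁ ≤ angFrom z ζ₂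

/-- The average `f̂_K = (1/|K|) ∫_K f dA` of `f` over a set `K`. -/
def avgOn (f : ℂ → ℂ) (K : Set ℂ) : ℂ := ((dA K).toReal)⁻¹ • ∫ w in K, f w ∂dA

/-- The average function `f̂(z) = f̂_{B(z)}`. -/
def avg (f : ℂ → ℂ) (z : ℂ) : ℂ := avgOn f (Bz z)

/-- The quantity `(1/|B(z)|) |∫_{B(z,ζ)} (f(ξ) - f̂(z)) dA(ξ)|`. -/
def wQuot (f : ℂ → ℂ) (z ζ : ℂ) : ℝ :=
  ((dA (Bz z)).toReal)⁻¹ * ‖∫ ξ in Bzz z ζ, (f ξ - avg f z) ∂dA‖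

/-- The BWMO condition: `‖f‖_BWMO < ∞`. -/
def IsBWMO (f : ℂ → ℂ) : Prop := ∃ C : ℝ, ∀ z ∈ unitDisc, ∀ ζ ∈ Bz z, wQuot f z ζ ≤ C

/-- The BWMO seminorm `‖f‖_BWMO`. -/
def bwmoNorm (f : ℂ → ℂ) : ℝ :=
  sSup {c : ℝ | ∃ z ∈ unitDisc, ∃ ζ ∈ Bz z, c = wQuot f z ζ}

/-- The VWMO condition:
`(1/|B(z)|) sup_{ζ ∈ B(z)} |∫_{B(z,ζ)} (f - f̂(z)) dA| → 0` as `|z| → 1`. -/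
def IsVWMO (f : ℂ → ℂ) : Prop :=
  ∀ ε > (0:ℝ), ∃ r₀ < (1:ℝ), ∀ z ∈ unitDisc, r₀ ≤ ‖z‖ → ∀ ζ ∈ Bz z, wQuot f z ζ ≤ ε

/-- The Bergman-metric disc `D(z,1)` of radius `1` centered at `z`. -/
def Dball (z : ℂ) : Set ℂ :=
  {w : ℂ | ‖w‖ < 1 ∧ ‖(z - w) / (1 - (starRingEnd ℂ) w * z)‖ < Real.tanh 1}

/-- The hyperbolic average `f̂₁(z) = (1/|D(z,1)|) ∫_{D(z,1)} f dA` of a real-valued `f`. -/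
def avg1 (f : ℂ → ℝ) (z : ℂ) : ℝ := ((dA (Dball z)).toReal)⁻¹ * ∫ w in Dball z, f w ∂dA

/-- The mean oscillation `(1/|D(z,1)|) ∫_{D(z,1)} |f - f̂₁(z)| dA` of a real-valued `f`. -/
def meanOsc1 (f : ℂ → ℝ) (z : ℂ) : ℝ :=
  ((dA (Dball z)).toReal)⁻¹ * ∫ ξ in Dball z, |f ξ - avg1 f z| ∂dA

/-- The Berezin transform `f̃(z) = ∫_𝔻 f(w) |k_z(w)|² dA(w)`,
where `k_z(w) = (1-|z|²)/(1-w z̄)²`. -/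
def berezin (f : ℂ → ℂ) (z : ℂ) : ℂ :=
  ∫ w in unitDisc, f w * ((((1 - ‖z‖ ^ 2) ^ 2 / ‖1 - w * (starRingEnd ℂ) z‖ ^ 4 : ℝ)) : ℂ) ∂dA

/-- The example symbol of Section 4:
`f(r e^{iθ}) = (1/(r (1-r)^{b-β})) sin(1/(1-r)^b)` for `r ≥ 1/2`, and `1` for `r < 1/2`. -/
def fEx (b β : ℝ) (z : ℂ) : ℝ :=
  if ‖z‖ < 1 / 2 then 1
  else (1 / (‖z‖ * (1 - ‖z‖) ^ (b - β))) * Real.sin (1 / (1 - ‖z‖) ^ b)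

end


open MeasureTheory Set Real

noncomputable section

lemma polarRect_eq_image (r₁ r₂ a b : ℝ) :
    polarRect r₁ r₂ a b = (fun p : ℝ × ℝ => (p.1 : ℂ) * Complex.exp ((p.2 : ℂ) * Complex.I)) ''
      (Icc r₁ r₂ ×ˢ Icc a b) := by
  ext w
  constructor
  · rintro ⟨ρ, φ, h1, h2, h3, h4, rfl⟩
    exact ⟨(ρ, φ), ⟨⟨h1, h2⟩, h3, h4⟩, rfl⟩
  · rintro ⟨⟨ρ, φ⟩, ⟨⟨h1, h2⟩, h3, h4⟩, rfl⟩
    exact ⟨ρ, φ, h1, h2, h3, h4, rfl⟩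

lemma isCompact_polarRect (r₁ r₂ a b : ℝ) : IsCompact (polarRect r₁ r₂ a b) := by
  rw [polarRect_eq_image]
  exact ((isCompact_Icc.prod isCompact_Icc).image (by fun_prop))

lemma measurableSet_polarRect (r₁ r₂ a b : ℝ) : MeasurableSet (polarRect r₁ r₂ a b) :=
  (isCompact_polarRect r₁ r₂ a b).measurableSet

lemma norm_mem_of_mem_polarRect {r₁ r₂ a b : ℝ} (h0 : 0 ≤ r₁) {ξ : ℂ}
    (hξ : ξ ∈ polarRect r₁ r₂ a b) : ‖ξ‖ ∈ Icc r₁ r₂ := by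
  obtain ⟨ρ, φ, h1, h2, h3, h4, rfl⟩ := hξ
  have : ‖(ρ : ℂ) * Complex.exp ((φ : ℂ) * Complex.I)‖ = ρ := by
    rw [norm_mul, Complex.norm_exp_ofReal_mul_I]
    simp [abs_of_nonneg (h0.trans h1)]
  rw [this]; exact ⟨h1, h2⟩

lemma polarRect_rotate (r₁ r₂ φ₁ w : ℝ) :
    polarRect r₁ r₂ φ₁ (φ₁ + w) =
      (fun ξ => Complex.exp ((( φ₁ + w/2 : ℝ) : ℂ) * Complex.I) * ξ) ''
        polarRect r₁ r₂ (-(w/2)) (w/2) := by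
  ext ζ
  constructor
  · rintro ⟨ρ, φ, h1, h2, h3, h4, rfl⟩
    refine ⟨(ρ : ℂ) * Complex.exp (((φ - φ₁ - w/2 : ℝ) : ℂ) * Complex.I),
      ⟨ρ, φ - φ₁ - w/2, h1, h2, by linarith, by linarith, rfl⟩, ?_⟩
    show Complex.exp _ * (_ * Complex.exp _) = _
    rw [mul_left_comm, ← Complex.exp_add]
    push_cast
    ring_nf
  · rintro ⟨ξ, ⟨ρ, φ, h1, h2, h3, h4, rfl⟩, rfl⟩
    refine ⟨ρ, φ + (φ₁ + w/2), h1, h2, by linarith, by linarith, ?_⟩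
    show Complex.exp _ * (_ * Complex.exp _) = _
    rw [mul_left_comm, ← Complex.exp_add]
    push_cast
    ring_nf

lemma polarCoord_symm_eq (p : ℝ × ℝ) :
    Complex.polarCoord.symm p = (p.1 : ℂ) * Complex.exp ((p.2 : ℂ) * Complex.I) := by
  rw [Complex.polarCoord_symm_apply, Complex.exp_mul_I]
  push_cast
  ring

lemma mem_polarRect_iff {r₁ r₂ a b ρ φ : ℝ} (h0 : 0 ≤ r₁) (hρ : 0 < ρ)
    (hφ : φ ∈ Ioo (-π) π) (ha : -π < a) (hb : b ≤ π) :
    (ρ : ℂ) * Complex.exp ((φ : ℂ) * Complex.I) ∈ polarRect r₁ r₂ a b ↔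
      ρ ∈ Icc r₁ r₂ ∧ φ ∈ Icc a b := by
  constructor
  · rintro ⟨ρ', φ', h1, h2, h3, h4, he⟩
    have hnorm : ρ = ρ' := by
      have e1 : ‖(ρ : ℂ) * Complex.exp ((φ : ℂ) * Complex.I)‖ = ρ := by
        rw [norm_mul, Complex.norm_exp_ofReal_mul_I]
        simp [abs_of_nonneg hρ.le]
      have e2 : ‖(ρ' : ℂ) * Complex.exp ((φ' : ℂ) * Complex.I)‖ = ρ' := by
        rw [norm_mul, Complex.norm_exp_ofReal_mul_I]
        simp [abs_of_nonneg (h0.trans h1)]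
      rw [← e1, he, e2]
    subst hnorm
    have hexp : Complex.exp ((φ : ℂ) * Complex.I) = Complex.exp ((φ' : ℂ) * Complex.I) :=
      mul_left_cancel₀ (by exact_mod_cast hρ.ne') he
    have hargeq : φ = φ' := by
      have g1 : Complex.arg (Complex.exp ((φ : ℂ) * Complex.I)) = φ := by
        rw [Complex.exp_mul_I]
        exact Complex.arg_cos_add_sin_mul_I ⟨hφ.1, hφ.2.le⟩
      have g2 : Complex.arg (Complex.exp ((φ' : ℂ) * Complex.I)) = φ' := by
        rw [Complex.exp_mul_I]
        exact Complex.arg_cos_add_sin_mul_I ⟨lt_of_lt_of_le ha h3, h4.trans hb⟩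
      rw [← g1, hexp, g2]
    subst hargeq
    exact ⟨⟨h1, h2⟩, h3, h4⟩
  · rintro ⟨⟨h1, h2⟩, h3, h4⟩
    exact ⟨ρ, φ, h1, h2, h3, h4, rfl⟩

end

noncomputable section

open MeasureTheory Set Real

lemma rot_measurePreserving (t : ℝ) :
    MeasurePreserving (fun ξ : ℂ => Complex.exp ((t : ℂ) * Complex.I) * ξ) volume volume := by
  have : (fun ξ : ℂ => Complex.exp ((t : ℂ) * Complex.I) * ξ) = ⇑(rotation (Circle.exp t)) := by
    ext ξ; simp [Circle.coe_exp]
  rw [this]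
  exact (rotation (Circle.exp t)).measurePreserving

lemma rot_measurableEmbedding (t : ℝ) :
    MeasurableEmbedding (fun ξ : ℂ => Complex.exp ((t : ℂ) * Complex.I) * ξ) := by
  have : (fun ξ : ℂ => Complex.exp ((t : ℂ) * Complex.I) * ξ) = ⇑(rotation (Circle.exp t)) := by
    ext ξ; simp [Circle.coe_exp]
  rw [this]
  exact (rotation (Circle.exp t)).toHomeomorph.measurableEmbedding

lemma integral_polarRect (gC : ℝ → ℂ) {r₁ r₂ w : ℝ} (φ₁ : ℝ) (h0 : 0 ≤ r₁)
    (hw0 : 0 ≤ w) (hwπ : w ≤ π) :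
    ∫ ξ in polarRect r₁ r₂ φ₁ (φ₁ + w), gC ‖ξ‖ =
      (w : ℂ) * ∫ ρ in Ioc r₁ r₂, (ρ : ℂ) * gC ρ := by
  have hπ := Real.pi_pos
  -- rotate
  rw [polarRect_rotate, (rot_measurePreserving (φ₁ + w/2)).setIntegral_image_emb
    (rot_measurableEmbedding _) _ _]
  have hnorm : ∀ ξ : ℂ, ‖Complex.exp (((φ₁ + w/2 : ℝ) : ℂ) * Complex.I) * ξ‖ = ‖ξ‖ := by
    intro ξ
    rw [norm_mul, Complex.norm_exp_ofReal_mul_I, one_mul]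
  simp_rw [hnorm]
  -- polar coordinates
  set S₀ := polarRect r₁ r₂ (-(w/2)) (w/2) with hS₀
  have hmS₀ : MeasurableSet S₀ := measurableSet_polarRect _ _ _ _
  rw [← integral_indicator hmS₀, ← Complex.integral_comp_polarCoord_symm]
  have hstep : ∀ p ∈ polarCoord.target,
      p.1 • S₀.indicator (fun ξ => gC ‖ξ‖) (Complex.polarCoord.symm p) =
      ((Icc r₁ r₂ ×ˢ Icc (-(w/2)) (w/2)) : Set (ℝ × ℝ)).indicator
        (fun p => (p.1 : ℂ) * gC p.1) p := by
    rintro ⟨ρ, φ⟩ hp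
    rw [polarCoord_target] at hp
    obtain ⟨hρ : ρ ∈ Ioi 0, hφ⟩ := hp
    have hmem : Complex.polarCoord.symm (ρ, φ) ∈ S₀ ↔ (ρ, φ) ∈
        (Icc r₁ r₂ ×ˢ Icc (-(w/2)) (w/2) : Set (ℝ × ℝ)) := by
      rw [polarCoord_symm_eq, hS₀]
      rw [mem_polarRect_iff h0 hρ hφ (by linarith) (by linarith)]
      simp only [Set.mem_prod, mem_Icc]
    by_cases h : (ρ, φ) ∈ (Icc r₁ r₂ ×ˢ Icc (-(w/2)) (w/2) : Set (ℝ × ℝ))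
    · rw [indicator_of_mem h, indicator_of_mem (hmem.mpr h)]
      have hval : ‖Complex.polarCoord.symm (ρ, φ)‖ = ρ := by
        rw [polarCoord_symm_eq]
        rw [norm_mul, Complex.norm_exp_ofReal_mul_I, mul_one,
          Complex.norm_real]
        exact abs_of_pos hρ
      rw [hval]
      exact Complex.real_smul
    · rw [indicator_of_notMem h, indicator_of_notMem (fun hc => h (hmem.mp hc)), smul_zero]
  rw [setIntegral_congr_fun polarCoord.open_target.measurableSet hstep]
  rw [setIntegral_indicator (measurableSet_Icc.prod measurableSet_Icc)]
  have htarget : polarCoord.target ∩ (Icc r₁ r₂ ×ˢ Icc (-(w/2)) (w/2)) =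
      (Ioi 0 ∩ Icc r₁ r₂) ×ˢ (Ioo (-π) π ∩ Icc (-(w/2)) (w/2)) := by
    rw [polarCoord_target, Set.prod_inter_prod]
  rw [htarget]
  have hang : Ioo (-π) π ∩ Icc (-(w/2)) (w/2) = Icc (-(w/2)) (w/2) := by
    apply inter_eq_self_of_subset_right
    intro x hx
    simp only [mem_Icc] at hx
    simp only [mem_Ioo]
    constructor <;> linarith [hx.1, hx.2]
  rw [hang]
  have hae1 : (Ioi 0 ∩ Icc r₁ r₂ : Set ℝ) =ᵐ[volume] (Ioc r₁ r₂ : Set ℝ) := by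
    rw [MeasureTheory.ae_eq_set]
    constructor
    · refine measure_mono_null (fun x hx => ?_) (measure_singleton r₁)
      obtain ⟨⟨hx0, hx1, hx2⟩, hx3⟩ := hx
      simp only [mem_Ioc, not_and, not_le] at hx3
      have hh : ¬ r₁ < x := fun h => absurd hx2 (not_le_of_gt (hx3 h))
      exact Set.mem_singleton_iff.mpr (le_antisymm (not_lt.mp hh) hx1)
    · have hsub : (Ioc r₁ r₂ : Set ℝ) ⊆ Ioi 0 ∩ Icc r₁ r₂ := by
        intro x hx
        exact ⟨lt_of_le_of_lt h0 hx.1, hx.1.le, hx.2⟩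
      rw [Set.diff_eq_empty.mpr hsub]
      exact measure_empty
  calc ∫ p : ℝ × ℝ in (Ioi 0 ∩ Icc r₁ r₂) ×ˢ Icc (-(w/2)) (w/2), (p.1 : ℂ) * gC p.1
      = ∫ p : ℝ × ℝ in (Ioi 0 ∩ Icc r₁ r₂) ×ˢ Icc (-(w/2)) (w/2),
          (fun x : ℝ => (x : ℂ) * gC x) p.1 * (fun _ : ℝ => (1:ℂ)) p.2 := by simp
    _ = (∫ x in Ioi 0 ∩ Icc r₁ r₂, (x : ℂ) * gC x) * ∫ y in Icc (-(w/2)) (w/2), (1:ℂ) := by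
        rw [Measure.volume_eq_prod]
        exact setIntegral_prod_mul (fun x : ℝ => (x : ℂ) * gC x) (fun _ : ℝ => (1:ℂ)) _ _
    _ = (∫ x in Ioc r₁ r₂, (x : ℂ) * gC x) * ∫ y in Icc (-(w/2)) (w/2), (1:ℂ) := by
        rw [setIntegral_congr_set hae1]
    _ = (w : ℂ) * ∫ ρ in Ioc r₁ r₂, (ρ : ℂ) * gC ρ := by
        rw [setIntegral_const, measureReal_def, Real.volume_Icc]
        rw [show (w/2 - -(w/2)) = w by ring, ENNReal.toReal_ofReal hw0]
        rw [mul_comm, Complex.real_smul]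
        ring

end

noncomputable section

open MeasureTheory Set Real

lemma volume_polarRect {r₁ r₂ w : ℝ} (φ₁ : ℝ) (h0 : 0 ≤ r₁) (h12 : r₁ ≤ r₂)
    (hw0 : 0 ≤ w) (hwπ : w ≤ π) :
    (volume (polarRect r₁ r₂ φ₁ (φ₁ + w))).toReal = w * (r₂^2 - r₁^2) / 2 := by
  have h := integral_polarRect (r₁ := r₁) (r₂ := r₂) (fun _ => (1:ℂ)) φ₁ h0 hw0 hwπ
  rw [setIntegral_const] at h
  have h2 : (∫ ρ in Ioc r₁ r₂, (ρ : ℂ) * 1) = (((r₂^2 - r₁^2)/2 : ℝ) : ℂ) := by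
    simp_rw [mul_one]
    rw [← intervalIntegral.integral_of_le h12, intervalIntegral.integral_ofReal,
      integral_id]
  have h3 : (((volume (polarRect r₁ r₂ φ₁ (φ₁ + w))).toReal : ℝ) : ℂ)
      = ((w * (r₂^2 - r₁^2)/2 : ℝ) : ℂ) := by
    calc (((volume (polarRect r₁ r₂ φ₁ (φ₁ + w))).toReal : ℝ) : ℂ)
        = (volume (polarRect r₁ r₂ φ₁ (φ₁ + w))).toReal • (1:ℂ) := by
          rw [Complex.real_smul, mul_one]
      _ = (w : ℂ) * (((r₂^2 - r₁^2)/2 : ℝ) : ℂ) := by rw [← measureReal_def, h, h2]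
      _ = ((w * (r₂^2 - r₁^2)/2 : ℝ) : ℂ) := by push_cast; ring
  exact_mod_cast h3

/-- The radial profile of the example symbol. -/
def Fr (b β ρ : ℝ) : ℝ :=
  if ρ < 1 / 2 then 1 else (1 / (ρ * (1 - ρ) ^ (b - β))) * Real.sin (1 / (1 - ρ) ^ b)

lemma measurable_Fr (b β : ℝ) : Measurable (Fr b β) := by
  unfold Fr
  apply Measurable.ite (measurableSet_lt measurable_id measurable_const)
  · exact measurable_const
  · fun_prop

lemma continuousOn_aux {b β : ℝ} :
    ∀ s : Set ℝ, (∀ ρ ∈ s, ρ < 1) →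
    ContinuousOn (fun ρ => Real.sin (((1-ρ)^b)⁻¹) * (1-ρ)^(β-b)) s ∧
    ContinuousOn (fun ρ => (1-ρ)^β * Real.cos (((1-ρ)^b)⁻¹)) s := by
  intro s hs
  have hc1 : ContinuousOn (fun ρ : ℝ => 1 - ρ) s := (continuous_const.sub continuous_id).continuousOn
  have hne : ∀ ρ ∈ s, (1:ℝ) - ρ ≠ 0 := fun ρ hρ => ne_of_gt (by have := hs ρ hρ; linarith)
  have hrb : ContinuousOn (fun ρ : ℝ => (1-ρ)^b) s :=
    ContinuousOn.rpow_const hc1 (fun ρ hρ => Or.inl (hne ρ hρ))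
  have hrβb : ContinuousOn (fun ρ : ℝ => (1-ρ)^(β-b)) s :=
    ContinuousOn.rpow_const hc1 (fun ρ hρ => Or.inl (hne ρ hρ))
  have hrβ : ContinuousOn (fun ρ : ℝ => (1-ρ)^β) s :=
    ContinuousOn.rpow_const hc1 (fun ρ hρ => Or.inl (hne ρ hρ))
  have hinv : ContinuousOn (fun ρ : ℝ => ((1-ρ)^b)⁻¹) s :=
    ContinuousOn.inv₀ hrb (fun ρ hρ => by
      have h1 : 0 < 1 - ρ := by have := hs ρ hρ; linarith
      exact (Real.rpow_pos_of_pos h1 b).ne')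
  exact ⟨(Real.continuous_sin.comp_continuousOn hinv).mul hrβb,
    hrβ.mul (Real.continuous_cos.comp_continuousOn hinv)⟩

/-- Key oscillation estimate via integration by parts. -/
lemma abs_J_le {b β : ℝ} (hβ : 0 < β) (hbβ : β ≤ b) {r r' : ℝ} (hr : 1/2 ≤ r) (hr1 : r < 1)
    (hrr' : r ≤ r') (hr' : r' ≤ (1 + r)/2) :
    |∫ ρ in r..r', Fr b β ρ * ρ| ≤ ((β + 3)/b) * (1 - r)^(β + 1) := by
  have hb : 0 < b := lt_of_lt_of_le hβ hbβ
  have hr'1 : r' < 1 := by linarith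
  have hIcc : uIcc r r' = Icc r r' := uIcc_of_le hrr'
  have hlt1 : ∀ ρ ∈ Icc r r', ρ < 1 := fun ρ hρ => lt_of_le_of_lt hρ.2 hr'1
  -- the integrand on the interval
  have hcongr : ∀ ρ ∈ uIcc r r', Fr b β ρ * ρ = Real.sin (((1-ρ)^b)⁻¹) * (1-ρ)^(β-b) := by
    intro ρ hρ
    rw [hIcc] at hρ
    have hρhalf : ¬ ρ < 1/2 := not_lt.mpr (hr.trans hρ.1)
    have hρ0 : (0:ℝ) < ρ := by linarith [hρ.1]
    have hρ1 : (0:ℝ) < 1 - ρ := by linarith [hlt1 ρ hρ]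
    rw [Fr, if_neg hρhalf]
    rw [one_div, one_div]
    have hX : ((1-ρ)^(b-β) : ℝ) ≠ 0 := (Real.rpow_pos_of_pos hρ1 _).ne'
    have hXinv : ((1-ρ)^(b-β) : ℝ)⁻¹ = (1-ρ)^(β-b) := by
      rw [← Real.rpow_neg hρ1.le]
      ring_nf
    field_simp [mul_comm]
    rw [← hXinv]
    field_simp
  rw [intervalIntegral.integral_congr hcongr]
  -- antiderivative
  set u : ℝ → ℝ := fun ρ => ((1-ρ)^b)⁻¹ with hu
  set H : ℝ → ℝ := fun ρ => b⁻¹ * ((1-ρ)^(β+1) * Real.cos (u ρ)) with hH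
  have hderiv : ∀ ρ ∈ uIcc r r', HasDerivAt H
      (-(Real.sin (u ρ) * (1-ρ)^(β-b)) - ((β+1)/b) * ((1-ρ)^β * Real.cos (u ρ))) ρ := by
    intro ρ hρ
    rw [hIcc] at hρ
    have hx : (0:ℝ) < 1 - ρ := by linarith [hlt1 ρ hρ]
    have h1 : HasDerivAt (fun ρ : ℝ => 1 - ρ) (-1) ρ := by
      simpa using (hasDerivAt_id ρ).const_sub 1
    have h2 : HasDerivAt (fun ρ : ℝ => (1-ρ)^(β+1)) (-((β+1) * (1-ρ)^β)) ρ := by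
      have := (Real.hasDerivAt_rpow_const (x := 1 - ρ) (p := β+1) (Or.inl hx.ne')).comp ρ h1
      refine this.congr_deriv ?_
      rw [show β + 1 - 1 = β by ring]
      ring
    have h3 : HasDerivAt (fun ρ : ℝ => (1-ρ)^b) (-(b * (1-ρ)^(b-1))) ρ := by
      have := (Real.hasDerivAt_rpow_const (x := 1 - ρ) (p := b) (Or.inl hx.ne')).comp ρ h1
      refine this.congr_deriv ?_
      ring
    have hbne : ((1-ρ)^b : ℝ) ≠ 0 := (Real.rpow_pos_of_pos hx b).ne'
    have h4 : HasDerivAt u (b * (1-ρ)^(b-1) / ((1-ρ)^b)^2) ρ := by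
      have := h3.inv hbne
      refine this.congr_deriv ?_
      ring
    have h5 : HasDerivAt (fun ρ => Real.cos (u ρ))
        (-Real.sin (u ρ) * (b * (1-ρ)^(b-1) / ((1-ρ)^b)^2)) ρ :=
      (Real.hasDerivAt_cos (u ρ)).comp ρ h4
    have h6 := (h2.mul h5).const_mul b⁻¹
    have l1 : ((1-ρ):ℝ)^(β+1) * (1-ρ)^(b-1) = (1-ρ)^(β+b) := by
      rw [← Real.rpow_add hx]; congr 1; ring
    have l2 : ((1-ρ):ℝ)^(β-b) * ((1-ρ)^b * (1-ρ)^b) = (1-ρ)^(β+b) := by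
      rw [← Real.rpow_add hx, ← Real.rpow_add hx]; congr 1; ring
    have key : (1-ρ)^(β+1) * (b * (1-ρ)^(b-1) / ((1-ρ)^b)^2) = b * (1-ρ)^(β-b) := by
      rw [sq, mul_div_assoc', div_eq_iff (mul_ne_zero hbne hbne)]
      linear_combination b * l1 - b * l2
    have e : b⁻¹ * (-((β+1) * (1-ρ)^β) * Real.cos (u ρ) +
        (1-ρ)^(β+1) * (-Real.sin (u ρ) * (b * (1-ρ)^(b-1) / ((1-ρ)^b)^2)))
        = -(Real.sin (u ρ) * (1-ρ)^(β-b)) - ((β+1)/b) * ((1-ρ)^β * Real.cos (u ρ)) := by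
      have e4 : (1-ρ)^(β+1) * (-Real.sin (u ρ) * (b * (1-ρ)^(b-1) / ((1-ρ)^b)^2))
          = -Real.sin (u ρ) * (b * (1-ρ)^(β-b)) := by
        rw [← key]; ring
      rw [e4]
      field_simp
      ring
    exact h6.congr_deriv e
  -- split the integral
  set S : ℝ → ℝ := fun ρ => Real.sin (u ρ) * (1-ρ)^(β-b) with hS
  set Cc : ℝ → ℝ := fun ρ => (1-ρ)^β * Real.cos (u ρ) with hCc
  have hcont := continuousOn_aux (b := b) (β := β) (Icc r r') hlt1
  have hintS : IntervalIntegrable S volume r r' := by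
    apply ContinuousOn.intervalIntegrable; rw [hIcc]; exact hcont.1
  have hintC : IntervalIntegrable Cc volume r r' := by
    apply ContinuousOn.intervalIntegrable; rw [hIcc]; exact hcont.2
  have hintD : IntervalIntegrable (fun ρ => -(S ρ) - ((β+1)/b) * Cc ρ) volume r r' :=
    (hintS.neg).sub (hintC.const_mul _)
  have hFTC : ∫ ρ in r..r', (-(S ρ) - ((β+1)/b) * Cc ρ) = H r' - H r :=
    intervalIntegral.integral_eq_sub_of_hasDerivAt (fun ρ hρ => hderiv ρ hρ) hintD
  have e1 : (∫ ρ in r..r', (-(S ρ) - ((β+1)/b) * Cc ρ))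
      = (∫ ρ in r..r', -(S ρ)) - ∫ ρ in r..r', ((β+1)/b) * Cc ρ :=
    intervalIntegral.integral_sub hintS.neg (hintC.const_mul _)
  have e2 : (∫ ρ in r..r', -(S ρ)) = -(∫ ρ in r..r', S ρ) := intervalIntegral.integral_neg
  have e3 : (∫ ρ in r..r', ((β+1)/b) * Cc ρ) = ((β+1)/b) * ∫ ρ in r..r', Cc ρ :=
    intervalIntegral.integral_const_mul _ _
  have hsplit : ∫ ρ in r..r', (-(S ρ) - ((β+1)/b) * Cc ρ)
      = -(∫ ρ in r..r', S ρ) - ((β+1)/b) * ∫ ρ in r..r', Cc ρ := by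
    rw [e1, e2, e3]
  have hJ : ∫ ρ in r..r', S ρ = (H r - H r') - ((β+1)/b) * ∫ ρ in r..r', Cc ρ := by
    rw [hsplit] at hFTC; linarith
  show |∫ ρ in r..r', S ρ| ≤ _
  rw [hJ]
  -- bounds
  have hx0 : (0:ℝ) < 1 - r := by linarith
  set Y : ℝ := (1-r)^(β+1) with hY
  have hY0 : 0 ≤ Y := Real.rpow_nonneg hx0.le _
  have hHbound : ∀ t ∈ Icc r r', |H t| ≤ b⁻¹ * Y := by
    intro t ht
    have hxt : (0:ℝ) ≤ 1 - t := by linarith [hlt1 t ht]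
    rw [hH]
    rw [abs_mul, abs_mul, abs_of_nonneg (inv_nonneg.mpr hb.le)]
    calc b⁻¹ * (|(1-t)^(β+1)| * |Real.cos (u t)|)
        ≤ b⁻¹ * (Y * 1) := by
          apply mul_le_mul_of_nonneg_left _ (inv_nonneg.mpr hb.le)
          apply mul_le_mul _ (Real.abs_cos_le_one _) (abs_nonneg _) hY0
          rw [abs_of_nonneg (Real.rpow_nonneg hxt _)]
          exact Real.rpow_le_rpow hxt (by linarith [ht.1]) (by linarith)
      _ = b⁻¹ * Y := by ring
  have hCbound : |∫ ρ in r..r', Cc ρ| ≤ Y := by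
    have h1 : ∀ x ∈ Set.uIoc r r', ‖Cc x‖ ≤ (1-r)^β := by
      intro x hx
      rw [Set.uIoc_of_le hrr'] at hx
      have hx1 : (0:ℝ) ≤ 1 - x := by linarith [hx.2, hr'1]
      rw [Real.norm_eq_abs, hCc, abs_mul]
      calc |(1-x)^β| * |Real.cos (u x)| ≤ (1-r)^β * 1 := by
            apply mul_le_mul _ (Real.abs_cos_le_one _) (abs_nonneg _)
              (Real.rpow_nonneg hx0.le _)
            rw [abs_of_nonneg (Real.rpow_nonneg hx1 _)]
            exact Real.rpow_le_rpow hx1 (by linarith [hx.1]) hβ.le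
        _ = (1-r)^β := by ring
    have h2 := intervalIntegral.norm_integral_le_of_norm_le_const h1
    rw [Real.norm_eq_abs] at h2
    calc |∫ ρ in r..r', Cc ρ| ≤ (1-r)^β * |r' - r| := h2
      _ ≤ (1-r)^β * (1-r) := by
          apply mul_le_mul_of_nonneg_left _ (Real.rpow_nonneg hx0.le _)
          rw [abs_of_nonneg (by linarith : (0:ℝ) ≤ r' - r)]
          linarith
      _ = Y := by rw [hY, Real.rpow_add_one hx0.ne']
  have hc : (0:ℝ) ≤ (β+1)/b := by positivity
  have hKr := abs_le.mp (hHbound r ⟨le_refl r, hrr'⟩)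
  have hKr' := abs_le.mp (hHbound r' ⟨hrr', le_refl r'⟩)
  have hB := abs_le.mp hCbound
  have hB1 := mul_le_mul_of_nonneg_left hB.1 hc
  have hB2 := mul_le_mul_of_nonneg_left hB.2 hc
  have hK : b⁻¹ * Y + b⁻¹ * Y + ((β+1)/b) * Y = ((β+3)/b) * Y := by
    field_simp
    ring
  apply abs_le.mpr
  constructor <;> nlinarith [hKr.1, hKr.2, hKr'.1, hKr'.2, hB1, hB2]

end

noncomputable section

open MeasureTheory Set Real

lemma fEx_eq (b β : ℝ) (z : ℂ) : fEx b β z = Fr b β ‖z‖ := rfl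

lemma Fr_le_crude {b β : ℝ} (hbβ : β ≤ b) {R ρ : ℝ} (hρ0 : 0 ≤ ρ) (hρR : ρ ≤ R) (hR : R < 1) :
    |Fr b β ρ| ≤ max 1 (2 * ((1 - R) ^ (b - β))⁻¹) := by
  by_cases h : ρ < 1/2
  · rw [Fr, if_pos h, abs_one]
    exact le_max_left _ _
  · rw [Fr, if_neg h]
    push_neg at h
    have h1ρ : (0:ℝ) < 1 - ρ := by linarith
    have h1R : (0:ℝ) < 1 - R := by linarith
    have hXρ : (0:ℝ) < (1-ρ)^(b-β) := Real.rpow_pos_of_pos h1ρ _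
    have hXR : (0:ℝ) < (1-R)^(b-β) := Real.rpow_pos_of_pos h1R _
    have hden : (0:ℝ) < ρ * (1-ρ)^(b-β) := mul_pos (by linarith) hXρ
    refine le_trans ?_ (le_max_right _ _)
    rw [abs_mul]
    have hXle : (1-R)^(b-β) ≤ (1-ρ)^(b-β) :=
      Real.rpow_le_rpow h1R.le (by linarith) (by linarith)
    have hden2 : (1/2) * (1-R)^(b-β) ≤ ρ * (1-ρ)^(b-β) :=
      mul_le_mul h hXle hXR.le (by linarith)
    calc |1/(ρ * (1-ρ)^(b-β))| * |Real.sin (1/(1-ρ)^b)|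
        ≤ (1/(ρ * (1-ρ)^(b-β))) * 1 := by
          apply mul_le_mul (le_of_eq (abs_of_pos (by positivity)))
            (Real.abs_sin_le_one _) (abs_nonneg _) (by positivity)
      _ = 1/(ρ * (1-ρ)^(b-β)) := mul_one _
      _ ≤ 1/((1/2) * (1-R)^(b-β)) :=
          one_div_le_one_div_of_le (by positivity) hden2
      _ = 2 * ((1-R)^(b-β))⁻¹ := by
          rw [one_div, mul_inv]
          norm_num
  
lemma angFrom_eq {z : ℂ} {ρ φ : ℝ} (hρ : 0 < ρ) (hφl : theta z ≤ φ)
    (hφu : φ < theta z + 2 * π) :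
    angFrom z ((ρ:ℂ) * Complex.exp ((φ:ℂ) * Complex.I)) = φ := by
  set ζ : ℂ := (ρ:ℂ) * Complex.exp ((φ:ℂ) * Complex.I) with hζ
  have habs : ‖ζ‖ = ρ := by
    rw [hζ]
    rw [norm_mul, Complex.norm_exp_ofReal_mul_I, mul_one, Complex.norm_real]
    exact abs_of_pos hρ
  have hexp : Complex.exp ((Complex.arg ζ : ℂ) * Complex.I) = Complex.exp ((φ:ℂ) * Complex.I) := by
    have h1 := Complex.norm_mul_exp_arg_mul_I ζ
    rw [habs] at h1
    have hρC : (ρ:ℂ) ≠ 0 := by exact_mod_cast hρ.ne'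
    exact mul_left_cancel₀ hρC (h1.trans hζ)
  obtain ⟨n, hn⟩ := Complex.exp_eq_exp_iff_exists_int.mp hexp
  have hreal : Complex.arg ζ = φ + n * (2 * π) := by
    have h2 : ((Complex.arg ζ : ℂ)) * Complex.I = ((φ + n * (2*π) : ℝ) : ℂ) * Complex.I := by
      rw [hn]; push_cast; ring
    have h3 := mul_right_cancel₀ Complex.I_ne_zero h2
    exact_mod_cast h3
  rw [angFrom, hreal]
  rw [show φ + (n:ℝ) * (2*π) = φ + n • (2*π) by simp [zsmul_eq_mul], toIcoMod_add_zsmul]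
  exact (toIcoMod_eq_self Real.two_pi_pos).mpr ⟨hφl, hφu⟩

lemma mem_Bz_bounds {z : ℂ} {ζ : ℂ} (hz1 : ‖z‖ < 1) (hz0 : 0 < ‖z‖) (hζ : ζ ∈ Bz z) :
    (‖z‖ ≤ ‖ζ‖ ∧ ‖ζ‖ ≤ 1 - (1 - ‖z‖)/2) ∧
      theta z ≤ angFrom z ζ ∧ angFrom z ζ ≤ theta z + π * (1 - ‖z‖) := by
  have hrad := norm_mem_of_mem_polarRect (norm_nonneg z) hζ
  refine ⟨⟨hrad.1, hrad.2⟩,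
    (Set.mem_Ico.mp (toIcoMod_mem_Ico Real.two_pi_pos (theta z) (Complex.arg ζ))).1, ?_⟩
  obtain ⟨ρ, φ, h1, h2, h3, h4, rfl⟩ := hζ
  have hρ : 0 < ρ := lt_of_lt_of_le hz0 h1
  have hπ := Real.pi_pos
  have hang : angFrom z ((ρ:ℂ) * Complex.exp ((φ:ℂ) * Complex.I)) = φ :=
    angFrom_eq hρ h3 (by nlinarith)
  rw [hang]
  exact h4

lemma polarRect_mono {r₁ r₂ r₂' φ₁ φ₂ φ₂' : ℝ} (h2 : r₂ ≤ r₂') (h4 : φ₂ ≤ φ₂') :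
    polarRect r₁ r₂ φ₁ φ₂ ⊆ polarRect r₁ r₂' φ₁ φ₂' := by
  rintro w ⟨ρ, φ, ha, hb, hc, hd, rfl⟩
  exact ⟨ρ, φ, ha, hb.trans h2, hc, hd.trans h4, rfl⟩

lemma integrableOn_fEx {b β : ℝ} (hbβ : β ≤ b) {r₁ r₂ : ℝ} (h0 : 0 ≤ r₁) (hr₂ : r₂ < 1)
    (φ₁ φ₂ : ℝ) :
    IntegrableOn (fun ξ : ℂ => ((Fr b β ‖ξ‖ : ℝ) : ℂ)) (polarRect r₁ r₂ φ₁ φ₂) volume := by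
  have hcpt := isCompact_polarRect r₁ r₂ φ₁ φ₂
  apply Integrable.mono' (g := fun _ => max 1 (2 * ((1 - r₂)^(b-β))⁻¹))
    (integrableOn_const hcpt.measure_lt_top.ne)
  · exact (Complex.measurable_ofReal.comp
      ((measurable_Fr b β).comp measurable_norm)).aestronglyMeasurable
  · filter_upwards [ae_restrict_mem hcpt.measurableSet] with ξ hξ
    rw [Complex.norm_real]
    have hmem := norm_mem_of_mem_polarRect h0 hξ
    exact Fr_le_crude hbβ (h0.trans hmem.1) hmem.2 hr₂

lemma scalar_key (hπ : 0 < π) (V N : ℝ) : (π⁻¹ * V)⁻¹ * (π⁻¹ * N) = V⁻¹ * N := by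
  rw [mul_inv, inv_inv]
  calc (π * V⁻¹) * (π⁻¹ * N) = (π * π⁻¹) * (V⁻¹ * N) := by ring
    _ = V⁻¹ * N := by rw [mul_inv_cancel₀ (ne_of_gt hπ), one_mul]

lemma avg_eq_vol (f : ℂ → ℂ) (z : ℂ) :
    avg f z = ((volume (Bz z)).toReal)⁻¹ • ∫ ξ in Bz z, f ξ := by
  have hπ := Real.pi_pos
  rw [avg, avgOn, dA]
  have h1 : (((ENNReal.ofReal π)⁻¹ • (volume : Measure ℂ)) (Bz z)).toReal
      = π⁻¹ * (volume (Bz z)).toReal := by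
    rw [Measure.smul_apply, smul_eq_mul, ENNReal.toReal_mul, ENNReal.toReal_inv,
      ENNReal.toReal_ofReal hπ.le]
  have h2 : (∫ ξ in Bz z, f ξ ∂((ENNReal.ofReal π)⁻¹ • (volume : Measure ℂ)))
      = ((ENNReal.ofReal π)⁻¹).toReal • ∫ ξ in Bz z, f ξ := by
    rw [Measure.restrict_smul, integral_smul_measure]
  rw [h1, h2, ENNReal.toReal_inv, ENNReal.toReal_ofReal hπ.le, smul_smul]
  congr 1
  have := scalar_key hπ (volume (Bz z)).toReal 1
  rw [mul_one, mul_one] at this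
  exact this

lemma wQuot_eq_vol (f : ℂ → ℂ) (z ζ : ℂ) :
    wQuot f z ζ = ((volume (Bz z)).toReal)⁻¹ * ‖∫ ξ in Bzz z ζ, (f ξ - avg f z)‖ := by
  have hπ := Real.pi_pos
  rw [wQuot, dA]
  have h1 : (((ENNReal.ofReal π)⁻¹ • (volume : Measure ℂ)) (Bz z)).toReal
      = π⁻¹ * (volume (Bz z)).toReal := by
    rw [Measure.smul_apply, smul_eq_mul, ENNReal.toReal_mul, ENNReal.toReal_inv,
      ENNReal.toReal_ofReal hπ.le]
  have h2 : (∫ ξ in Bzz z ζ, (f ξ - avg f z) ∂((ENNReal.ofReal π)⁻¹ • (volume : Measure ℂ)))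
      = ((ENNReal.ofReal π)⁻¹).toReal • ∫ ξ in Bzz z ζ, (f ξ - avg f z) := by
    rw [Measure.restrict_smul, integral_smul_measure]
  rw [h1, h2, ENNReal.toReal_inv, ENNReal.toReal_ofReal hπ.le, norm_smul, Real.norm_eq_abs,
    abs_of_nonneg (inv_nonneg.mpr hπ.le)]
  exact scalar_key hπ _ _

end

noncomputable section

open MeasureTheory Set Real

def Cconst (b β : ℝ) : ℝ := max (4 * ((β+3)/b)) (2 * (max 1 (2 * (4:ℝ)^(b-β))) * 2^β)

lemma Cconst_pos {b β : ℝ} (hβ : 0 < β) (hbβ : β ≤ b) : 0 < Cconst b β := by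
  have hb : 0 < b := hβ.trans_le hbβ
  exact lt_max_iff.mpr (Or.inl (by positivity))

lemma core_bound {b β r q Jv : ℝ} (hβ : 0 < β) (hbβ : β ≤ b) (hr : 1/2 ≤ r) (hr1 : r < 1)
    (hq0 : 0 ≤ q) (hq : q ≤ π * (1-r)) (hJ : |Jv| ≤ ((β+3)/b) * (1-r)^(β+1)) :
    ((π*(1-r)) * ((1 - (1-r)/2)^2 - r^2)/2)⁻¹ * (q * |Jv|) ≤ (4*((β+3)/b)) * (1-r)^β := by
  have hb : 0 < b := hβ.trans_le hbβ
  have hπ := Real.pi_pos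
  have h1r : (0:ℝ) < 1 - r := by linarith
  have hC1 : (0:ℝ) < (β+3)/b := by positivity
  have hX : (0:ℝ) ≤ (1-r)^β := Real.rpow_nonneg h1r.le β
  have hE : ((1-r):ℝ)^(β+1) = (1-r)^β * (1-r) := Real.rpow_add_one h1r.ne' β
  have hfact : ((1 - (1-r)/2)^2 - r^2 : ℝ) = (1-r)/2 * ((1 - (1-r)/2) + r) := by ring
  have hRr1 : (1:ℝ) ≤ (1 - (1-r)/2) + r := by linarith
  have hV0 : (0:ℝ) < (π*(1-r)) * ((1 - (1-r)/2)^2 - r^2)/2 := by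
    rw [hfact]
    apply div_pos _ two_pos
    exact mul_pos (mul_pos hπ h1r) (mul_pos (by linarith) (by linarith))
  rw [inv_mul_le_iff₀ hV0]
  have lhs_le : q * |Jv| ≤ (π*(1-r)) * (((β+3)/b) * ((1-r)^β * (1-r))) := by
    calc q * |Jv| ≤ (π*(1-r)) * (((β+3)/b) * (1-r)^(β+1)) :=
          mul_le_mul hq hJ (abs_nonneg _) (by positivity)
      _ = (π*(1-r)) * (((β+3)/b) * ((1-r)^β * (1-r))) := by rw [hE]
  refine le_trans lhs_le ?_
  rw [hfact]
  have hP : (0:ℝ) ≤ ((β+3)/b) * (1-r)^β * π * ((1-r)*(1-r)) * (((1 - (1-r)/2) + r) - 1) :=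
    mul_nonneg (mul_nonneg (mul_nonneg (mul_nonneg hC1.le hX) hπ.le)
      (mul_nonneg h1r.le h1r.le)) (by linarith)
  nlinarith [hP]

lemma norm_avg_le {b β : ℝ} (hβ : 0 < β) (hbβ : β ≤ b) {z : ℂ} (hz : ‖z‖ < 1) :
    ‖avg (fun ξ => ((fEx b β ξ : ℝ) : ℂ)) z‖ ≤ Cconst b β * (1 - ‖z‖)^β := by
  have hb : 0 < b := hβ.trans_le hbβ
  have hπ := Real.pi_pos
  set r := ‖z‖ with hrdef
  have hr0 : 0 ≤ r := norm_nonneg z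
  set R : ℝ := 1 - (1 - r)/2 with hR
  have hrR : r ≤ R := by rw [hR]; linarith
  have hR1 : R < 1 := by rw [hR]; linarith
  set w : ℝ := π * (1 - r) with hw
  have hw0 : 0 ≤ w := mul_nonneg hπ.le (by linarith)
  have hwπ : w ≤ π := by rw [hw]; nlinarith
  have hX : (0:ℝ) ≤ (1-r)^β := Real.rpow_nonneg (by linarith) β
  set J : ℝ := ∫ ρ in r..R, Fr b β ρ * ρ with hJdef
  have hBzEq : Bz z = polarRect r R (theta z) (theta z + w) := rfl
  have hV : (volume (Bz z)).toReal = w * (R^2 - r^2)/2 := by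
    rw [hBzEq]; exact volume_polarRect (theta z) hr0 hrR hw0 hwπ
  have hI : (∫ ξ in Bz z, ((fEx b β ξ : ℝ) : ℂ)) = ((w * J : ℝ) : ℂ) := by
    have hpolar := integral_polarRect (r₁ := r) (r₂ := R)
      (fun ρ => ((Fr b β ρ : ℝ) : ℂ)) (theta z) hr0 hw0 hwπ
    rw [← intervalIntegral.integral_of_le hrR,
      intervalIntegral.integral_congr (g := fun ρ : ℝ => ((Fr b β ρ * ρ : ℝ) : ℂ))
        (fun ρ _ => by push_cast; ring),
      intervalIntegral.integral_ofReal] at hpolar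
    calc (∫ ξ in Bz z, ((fEx b β ξ : ℝ) : ℂ))
        = ∫ ξ in polarRect r R (theta z) (theta z + w), ((Fr b β ‖ξ‖ : ℝ) : ℂ) := rfl
      _ = (w : ℂ) * ((J : ℝ) : ℂ) := hpolar
      _ = ((w * J : ℝ) : ℂ) := by push_cast; ring
  have hRr2 : (0:ℝ) ≤ R^2 - r^2 := by nlinarith
  have hV0' : (0:ℝ) ≤ w * (R^2 - r^2)/2 := div_nonneg (mul_nonneg hw0 hRr2) two_pos.le
  have hnorm : ‖avg (fun ξ => ((fEx b β ξ : ℝ) : ℂ)) z‖ = (w * (R^2 - r^2)/2)⁻¹ * (w * |J|) := by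
    rw [avg_eq_vol, hV, hI, norm_smul, Real.norm_eq_abs, abs_of_nonneg (inv_nonneg.mpr hV0'),
      Complex.norm_real, Real.norm_eq_abs, abs_mul, abs_of_nonneg hw0]
  rw [hnorm]
  by_cases hcase : 1/2 ≤ r
  · have habsJ : |J| ≤ ((β+3)/b) * (1-r)^(β+1) :=
      abs_J_le hβ hbβ hcase hz hrR (by rw [hR]; linarith)
    calc (w * (R^2 - r^2)/2)⁻¹ * (w * |J|)
        ≤ (4*((β+3)/b)) * (1-r)^β := core_bound hβ hbβ hcase hz hw0 (le_of_eq hw) habsJ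
      _ ≤ Cconst b β * (1-r)^β := mul_le_mul_of_nonneg_right (le_max_left _ _) hX
  · push_neg at hcase
    set M : ℝ := max 1 (2 * (4:ℝ)^(b-β)) with hM
    have hM1 : (1:ℝ) ≤ M := le_max_left _ _
    have hM0 : (0:ℝ) ≤ M := by linarith
    have hcrude : ∀ x ∈ Set.uIoc r R, ‖Fr b β x * x‖ ≤ M * R := by
      intro x hx
      rw [Set.uIoc_of_le hrR] at hx
      have hx0 : 0 ≤ x := le_trans hr0 hx.1.le
      rw [Real.norm_eq_abs, abs_mul]
      have h1 : |Fr b β x| ≤ max 1 (2 * ((1 - R)^(b-β))⁻¹) := Fr_le_crude hbβ hx0 hx.2 hR1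
      have h2 : ((1 - R)^(b-β))⁻¹ ≤ (4:ℝ)^(b-β) := by
        have e1 : ((4:ℝ)⁻¹)^(b-β) ≤ (1-R)^(b-β) :=
          Real.rpow_le_rpow (by norm_num) (by rw [hR]; linarith) (by linarith)
        have e2 : ((4:ℝ)⁻¹)^(b-β) = ((4:ℝ)^(b-β))⁻¹ := Real.inv_rpow (by norm_num) _
        rw [e2] at e1
        calc ((1 - R)^(b-β))⁻¹ ≤ (((4:ℝ)^(b-β))⁻¹)⁻¹ :=
              inv_anti₀ (by positivity) e1
          _ = (4:ℝ)^(b-β) := inv_inv _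
      have h3 : |Fr b β x| ≤ M :=
        le_trans h1 (max_le_max (le_refl 1) (by linarith))
      have h4 : |x| ≤ R := by rw [abs_of_nonneg hx0]; exact hx.2
      exact mul_le_mul h3 h4 (abs_nonneg _) hM0
    have habsJ : |J| ≤ M * R * |R - r| := by
      have h5 := intervalIntegral.norm_integral_le_of_norm_le_const hcrude
      rw [Real.norm_eq_abs] at h5
      exact h5
    have hw0' : 0 < w := by rw [hw]; exact mul_pos hπ (by linarith)
    have hRrpos : 0 < R - r := by rw [hR]; linarith
    have hRpos : 0 < R := by rw [hR]; linarith
    have hV0 : (0:ℝ) < w * (R^2 - r^2)/2 := by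
      apply div_pos _ two_pos
      exact mul_pos hw0' (by nlinarith)
    rw [inv_mul_le_iff₀ hV0]
    rw [abs_of_pos hRrpos] at habsJ
    have hOne : (1:ℝ) ≤ 2^β * (1-r)^β := by
      rw [← Real.mul_rpow (by norm_num) (by linarith)]
      calc (1:ℝ) = 1 ^ β := (Real.one_rpow β).symm
        _ ≤ (2 * (1-r))^β := Real.rpow_le_rpow (by norm_num) (by linarith) hβ.le
    have hCX : 2*M ≤ Cconst b β * (1-r)^β := by
      have h7 : 2*M*1 ≤ 2*M*(2^β*(1-r)^β) := mul_le_mul_of_nonneg_left hOne (by positivity)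
      have h8 : 2*M*(2^β*(1-r)^β) = (2*M*2^β) * (1-r)^β := by ring
      have h9 : (2*M*2^β) * (1-r)^β ≤ Cconst b β * (1-r)^β :=
        mul_le_mul_of_nonneg_right (le_max_right _ _) hX
      calc 2*M = 2*M*1 := by ring
        _ ≤ (2*M*2^β) * (1-r)^β := by rw [← h8]; exact h7
        _ ≤ Cconst b β * (1-r)^β := h9
    calc w * |J| ≤ w * (M * R * (R - r)) := mul_le_mul_of_nonneg_left habsJ hw0'.le
      _ ≤ w * (M * (R + r) * (R - r)) := by nlinarith [mul_nonneg (mul_nonneg hw0'.le hM0) (mul_nonneg hr0 hRrpos.le)]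
      _ = (2*M) * (w * ((R - r) * (R + r))/2) := by ring
      _ ≤ (Cconst b β * (1-r)^β) * (w * ((R - r) * (R + r))/2) := by
          apply mul_le_mul_of_nonneg_right hCX
          exact div_nonneg (mul_nonneg hw0'.le (mul_nonneg hRrpos.le (by linarith))) two_pos.le
      _ = w * (R^2 - r^2)/2 * (Cconst b β * (1-r)^β) := by ring

end

noncomputable section

open MeasureTheory Set Real

lemma wQuot_le {b β : ℝ} (hβ : 0 < β) (hbβ : β ≤ b) {z ζ : ℂ} (hz : ‖z‖ < 1)
    (hrhalf : 1/2 ≤ ‖z‖) (hζ : ζ ∈ Bz z) :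
    wQuot (fun ξ => ((fEx b β ξ : ℝ) : ℂ)) z ζ ≤ 2 * Cconst b β * (1 - ‖z‖)^β := by
  have hb : 0 < b := hβ.trans_le hbβ
  have hπ := Real.pi_pos
  set r := ‖z‖ with hrdef
  have hr0 : 0 ≤ r := norm_nonneg z
  obtain ⟨⟨hr1', hr2'⟩, ha1, ha2⟩ := mem_Bz_bounds hz (by linarith) hζ
  set r' := ‖ζ‖ with hr'def
  set R : ℝ := 1 - (1 - r)/2 with hR
  set θ := theta z with hθ
  set w : ℝ := π * (1 - r) with hw
  set w' : ℝ := angFrom z ζ - θ with hw'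
  have hrR : r ≤ R := by rw [hR]; linarith
  have hw'0 : 0 ≤ w' := by rw [hw']; linarith
  have hw'w : w' ≤ w := by rw [hw', hw]; linarith
  have hw0 : 0 ≤ w := mul_nonneg hπ.le (by linarith)
  have hwπ : w ≤ π := by rw [hw]; nlinarith
  have hw'π : w' ≤ π := hw'w.trans hwπ
  have hr'1 : r' < 1 := lt_of_le_of_lt hr2' (by rw [hR]; linarith)
  have hX : (0:ℝ) ≤ (1-r)^β := Real.rpow_nonneg (by linarith) β
  have hBzz : Bzz z ζ = polarRect r r' θ (θ + w') := by
    rw [Bzz]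
    congr 1
    rw [hw']
    ring
  have hfin : volume (Bzz z ζ) < ⊤ := by
    rw [hBzz]; exact (isCompact_polarRect _ _ _ _).measure_lt_top
  have hVzz : (volume (Bzz z ζ)).toReal = w' * (r'^2 - r^2)/2 := by
    rw [hBzz]; exact volume_polarRect θ hr0 hr1' hw'0 hw'π
  have hVz : (volume (Bz z)).toReal = w * (R^2 - r^2)/2 := by
    rw [show Bz z = polarRect r R θ (θ + w) from rfl]
    exact volume_polarRect θ hr0 hrR hw0 hwπ
  set J' : ℝ := ∫ ρ in r..r', Fr b β ρ * ρ with hJ'def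
  have hI : (∫ ξ in Bzz z ζ, ((fEx b β ξ : ℝ) : ℂ)) = ((w' * J' : ℝ) : ℂ) := by
    have hpolar := integral_polarRect (r₁ := r) (r₂ := r')
      (fun ρ => ((Fr b β ρ : ℝ) : ℂ)) θ hr0 hw'0 hw'π
    rw [← intervalIntegral.integral_of_le hr1',
      intervalIntegral.integral_congr (g := fun ρ : ℝ => ((Fr b β ρ * ρ : ℝ) : ℂ))
        (fun ρ _ => by push_cast; ring),
      intervalIntegral.integral_ofReal] at hpolar
    calc (∫ ξ in Bzz z ζ, ((fEx b β ξ : ℝ) : ℂ))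
        = ∫ ξ in polarRect r r' θ (θ + w'), ((Fr b β ‖ξ‖ : ℝ) : ℂ) := by
          rw [show (fun ξ : ℂ => ((fEx b β ξ : ℝ) : ℂ)) = fun ξ : ℂ => ((Fr b β ‖ξ‖ : ℝ) : ℂ)
            from rfl, hBzz]
      _ = (w' : ℂ) * ((J' : ℝ) : ℂ) := hpolar
      _ = ((w' * J' : ℝ) : ℂ) := by push_cast; ring
  have habsJ : |J'| ≤ ((β+3)/b) * (1-r)^(β+1) :=
    abs_J_le hβ hbβ hrhalf hz hr1' (by rw [hR] at hr2'; linarith)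
  set a := avg (fun ξ => ((fEx b β ξ : ℝ) : ℂ)) z with hadef
  have hint : IntegrableOn (fun ξ : ℂ => ((fEx b β ξ : ℝ) : ℂ)) (Bzz z ζ) volume := by
    rw [hBzz]; exact integrableOn_fEx hbβ hr0 hr'1 _ _
  have hsplit : (∫ ξ in Bzz z ζ, (((fEx b β ξ : ℝ) : ℂ) - a))
      = ((w' * J' : ℝ) : ℂ) - ((volume (Bzz z ζ)).toReal) • a := by
    rw [integral_sub hint (integrableOn_const hfin.ne), setIntegral_const, hI, measureReal_def]
  have hVz0 : (0:ℝ) < w * (R^2 - r^2)/2 := by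
    apply div_pos _ two_pos
    apply mul_pos (mul_pos hπ (by linarith))
    have h1 : 0 < R - r := by rw [hR]; linarith
    have h2 : 0 < R + r := by rw [hR]; linarith
    nlinarith
  have hbound : ‖∫ ξ in Bzz z ζ, (((fEx b β ξ : ℝ) : ℂ) - a)‖
      ≤ w' * |J'| + (w' * (r'^2 - r^2)/2) * ‖a‖ := by
    rw [hsplit]
    calc ‖((w' * J' : ℝ) : ℂ) - ((volume (Bzz z ζ)).toReal) • a‖
        ≤ ‖((w' * J' : ℝ) : ℂ)‖ + ‖((volume (Bzz z ζ)).toReal) • a‖ := norm_sub_le _ _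
      _ = |w' * J'| + (volume (Bzz z ζ)).toReal * ‖a‖ := by
          rw [Complex.norm_real, Real.norm_eq_abs, norm_smul, Real.norm_eq_abs,
            abs_of_nonneg ENNReal.toReal_nonneg]
      _ = w' * |J'| + (w' * (r'^2 - r^2)/2) * ‖a‖ := by
          rw [abs_mul, abs_of_nonneg hw'0, hVzz]
  have havz : ‖a‖ ≤ Cconst b β * (1-r)^β := norm_avg_le hβ hbβ hz
  have h2nd : (w * (R^2 - r^2)/2)⁻¹ * ((w' * (r'^2 - r^2)/2) * ‖a‖) ≤ ‖a‖ := by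
    have hr'R : r' ≤ R := hr2'
    have hsq : r'^2 - r^2 ≤ R^2 - r^2 := by
      have := pow_le_pow_left₀ (norm_nonneg ζ) hr'R 2
      linarith
    have hsq0 : 0 ≤ r'^2 - r^2 := by
      have := pow_le_pow_left₀ hr0 hr1' 2
      linarith
    have hVzzle : w' * (r'^2 - r^2)/2 ≤ w * (R^2 - r^2)/2 := by
      have hmm := mul_le_mul hw'w hsq hsq0 hw0
      calc w' * (r'^2 - r^2)/2 = (w' * (r'^2 - r^2)) * (1/2) := by ring
        _ ≤ (w * (R^2 - r^2)) * (1/2) := mul_le_mul_of_nonneg_right hmm (by norm_num)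
        _ = w * (R^2 - r^2)/2 := by ring
    calc (w * (R^2 - r^2)/2)⁻¹ * ((w' * (r'^2 - r^2)/2) * ‖a‖)
        = ((w * (R^2 - r^2)/2)⁻¹ * (w' * (r'^2 - r^2)/2)) * ‖a‖ := by ring
      _ ≤ 1 * ‖a‖ := by
          apply mul_le_mul_of_nonneg_right _ (norm_nonneg a)
          calc (w * (R^2 - r^2)/2)⁻¹ * (w' * (r'^2 - r^2)/2)
              ≤ (w * (R^2 - r^2)/2)⁻¹ * (w * (R^2 - r^2)/2) :=
                mul_le_mul_of_nonneg_left hVzzle (inv_nonneg.mpr hVz0.le)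
            _ = 1 := inv_mul_cancel₀ hVz0.ne'
      _ = ‖a‖ := one_mul _
  rw [wQuot_eq_vol, hVz]
  calc (w * (R^2 - r^2)/2)⁻¹ * ‖∫ ξ in Bzz z ζ, (((fEx b β ξ : ℝ) : ℂ) - a)‖
      ≤ (w * (R^2 - r^2)/2)⁻¹ * (w' * |J'| + (w' * (r'^2 - r^2)/2) * ‖a‖) :=
        mul_le_mul_of_nonneg_left hbound (inv_nonneg.mpr hVz0.le)
    _ = (w * (R^2 - r^2)/2)⁻¹ * (w' * |J'|)
        + (w * (R^2 - r^2)/2)⁻¹ * ((w' * (r'^2 - r^2)/2) * ‖a‖) := by ring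
    _ ≤ (4*((β+3)/b)) * (1-r)^β + ‖a‖ :=
        add_le_add (core_bound hβ hbβ hrhalf hz hw'0 (by rw [← hw]; exact hw'w) habsJ) h2nd
    _ ≤ Cconst b β * (1-r)^β + Cconst b β * (1-r)^β :=
        add_le_add (mul_le_mul_of_nonneg_right (le_max_left _ _) hX) havz
    _ = 2 * Cconst b β * (1-r)^β := by ring

end


/-- For `b ≥ β > 0`, the example symbol `f = fEx b β` satisfies the VWMO
condition, and there is `C > 0` with `|f̂(z)| ≤ C (1-|z|)^β` for all `z ∈ 𝔻`; in
particular `f̂(z) → 0` as `|z| → 1`. -/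
theorem example_vwmo (b β : ℝ) (hβ : 0 < β) (hbβ : β ≤ b) :
    IsVWMO (fun z => (fEx b β z : ℂ)) ∧
    (∃ C > (0:ℝ), ∀ z ∈ unitDisc,
      ‖avg (fun z => (fEx b β z : ℂ)) z‖ ≤ C * (1 - ‖z‖) ^ β) ∧
    (∀ ε > (0:ℝ), ∃ r₀ < (1:ℝ), ∀ z ∈ unitDisc, r₀ ≤ ‖z‖ →
      ‖avg (fun z => (fEx b β z : ℂ)) z‖ ≤ ε) := by
  
  have hC := Cconst_pos hβ hbβ
  refine ⟨?_, ⟨Cconst b β, hC, fun z hz => norm_avg_le hβ hbβ hz⟩, ?_⟩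
  · intro ε hε
    set δ : ℝ := min 1 ((ε / (2 * Cconst b β)) ^ (β⁻¹)) with hδ
    have hδ0 : 0 < δ := lt_min one_pos (Real.rpow_pos_of_pos (by positivity) _)
    refine ⟨max (1/2) (1 - δ), max_lt (by norm_num) (by linarith), fun z hz hr₀ ζ hζ => ?_⟩
    have hz1 : ‖z‖ < 1 := hz
    have hrhalf : 1/2 ≤ ‖z‖ := le_trans (le_max_left _ _) hr₀
    have h1r : 1 - ‖z‖ ≤ δ := by
      have := le_trans (le_max_right _ _) hr₀
      linarith
    have hkey : (1 - ‖z‖) ^ β ≤ ε / (2 * Cconst b β) := by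
      have h1 : (1 - ‖z‖) ^ β ≤ ((ε / (2 * Cconst b β)) ^ (β⁻¹)) ^ β :=
        Real.rpow_le_rpow (by linarith) (le_trans h1r (min_le_right _ _)) hβ.le
      rwa [← Real.rpow_mul (by positivity), inv_mul_cancel₀ hβ.ne', Real.rpow_one] at h1
    calc wQuot (fun z => (fEx b β z : ℂ)) z ζ
        ≤ 2 * Cconst b β * (1 - ‖z‖) ^ β := wQuot_le hβ hbβ hz1 hrhalf hζ
      _ ≤ 2 * Cconst b β * (ε / (2 * Cconst b β)) :=
          mul_le_mul_of_nonneg_left hkey (by positivity)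
      _ = ε := by field_simp
  · intro ε hε
    set δ : ℝ := min 1 ((ε / Cconst b β) ^ (β⁻¹)) with hδ
    have hδ0 : 0 < δ := lt_min one_pos (Real.rpow_pos_of_pos (by positivity) _)
    refine ⟨1 - δ, by linarith, fun z hz hr₀ => ?_⟩
    have hz1 : ‖z‖ < 1 := hz
    have h1r : 1 - ‖z‖ ≤ δ := by linarith
    have hkey : (1 - ‖z‖) ^ β ≤ ε / Cconst b β := by
      have h1 : (1 - ‖z‖) ^ β ≤ ((ε / Cconst b β) ^ (β⁻¹)) ^ β :=
        Real.rpow_le_rpow (by linarith) (le_trans h1r (min_le_right _ _)) hβ.le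
      rwa [← Real.rpow_mul (by positivity), inv_mul_cancel₀ hβ.ne', Real.rpow_one] at h1
    calc ‖avg (fun z => (fEx b β z : ℂ)) z‖
        ≤ Cconst b β * (1 - ‖z‖) ^ β := norm_avg_le hβ hbβ hz1
      _ ≤ Cconst b β * (ε / Cconst b β) := mul_le_mul_of_nonneg_left hkey hC.le
      _ = ε := by field_simp
end

section
/- Let b ≥ β > 0 and let f : 𝔻 → ℝ be defined by f(r·e^{iθ}) = (1/(r(1−r)^{b−β}))·sin(1/(1−r)^b) for 1/2 ≤ r < 1 and f(r·e^{iθ}) = 1 for 0 ≤ r < 1/2. Then f is integrable on 𝔻 with respect to dA (i.e. f ∈ L¹(𝔻, dA)) if and only if b − β < 1; for every choice of b and β, f is locally integrable on 𝔻. -/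
open MeasureTheory Set

namespace ExampleIntegrabilityAux

open MeasureTheory Set Metric Filter
open scoped ENNReal Real Topology

lemma lintegral_radial (g : ℝ → ℝ≥0∞) (hg : Measurable g) :
    ∫⁻ z : ℂ, g ‖z‖ = (2 * ENNReal.ofReal Real.pi) *
      ∫⁻ r in Set.Ioi (0:ℝ), ENNReal.ofReal r * g r := by
  have hms : MeasurableSet ({0}ᶜ : Set ℂ) := (measurableSet_singleton (0:ℂ)).compl
  have h1 : ∫⁻ z : ℂ, g ‖z‖ = ∫⁻ y : ({0}ᶜ : Set ℂ), g ‖y.1‖ ∂(volume.comap Subtype.val) := by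
    rw [lintegral_subtype_comap hms (fun z => g ‖z‖), MeasureTheory.restrict_compl_singleton]
  have hprev := (Measure.measurePreserving_homeomorphUnitSphereProd (volume : Measure ℂ))
  have hmeas : Measurable (fun x : sphere (0:ℂ) 1 × Ioi (0:ℝ) => g x.2) :=
    hg.comp (measurable_subtype_coe.comp measurable_snd)
  have h2 := hprev.lintegral_comp hmeas
  have h3 : ∀ y : ({0}ᶜ : Set ℂ),
      g ((homeomorphUnitSphereProd ℂ y).2 : ℝ) = g ‖y.1‖ := fun y => by simp [homeomorphUnitSphereProd]
  -- product integral
  have h4 : ∫⁻ x : sphere (0:ℂ) 1 × Ioi (0:ℝ), g x.2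
        ∂((volume : Measure ℂ).toSphere.prod (.volumeIoiPow (Module.finrank ℝ ℂ - 1)))
      = (volume : Measure ℂ).toSphere univ *
        ∫⁻ x : Ioi (0:ℝ), g x ∂(Measure.volumeIoiPow (Module.finrank ℝ ℂ - 1)) := by
    rw [lintegral_prod _ hmeas.aemeasurable]
    simp [lintegral_const, mul_comm]
  have h5 : ∫⁻ x : Ioi (0:ℝ), g x ∂(Measure.volumeIoiPow (Module.finrank ℝ ℂ - 1))
      = ∫⁻ r in Set.Ioi (0:ℝ), ENNReal.ofReal r * g r := by
    rw [Measure.volumeIoiPow]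
    rw [lintegral_withDensity_eq_lintegral_mul _
      ((measurable_subtype_coe.pow_const _).ennreal_ofReal)
      (show Measurable (fun x : Ioi (0:ℝ) => g ↑x) from hg.comp measurable_subtype_coe)]
    simp only [Pi.mul_apply]
    rw [lintegral_subtype_comap measurableSet_Ioi
      (fun r : ℝ => ENNReal.ofReal (r ^ (Module.finrank ℝ ℂ - 1)) * g r)]
    simp [Complex.finrank_real_complex]
  have h6 : (volume : Measure ℂ).toSphere univ = 2 * ENNReal.ofReal Real.pi := by
    rw [Measure.toSphere_apply_univ]
    simp [Complex.volume_ball, Complex.finrank_real_complex]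
    rw [← ENNReal.ofReal_coe_nnreal, NNReal.coe_real_pi]
  rw [h1]
  have := h2.symm
  rw [show (fun y : ({0}ᶜ : Set ℂ) => g ‖y.1‖)
      = fun y => g ((homeomorphUnitSphereProd ℂ y).2 : ℝ) from funext fun y => (h3 y).symm, ← this, h4, h5, h6]

lemma lintegral_radial_ball (F : ℝ → ℝ≥0∞) (hF : Measurable F) :
    ∫⁻ z in ball (0:ℂ) 1, F ‖z‖
      = (2 * ENNReal.ofReal Real.pi) * ∫⁻ r in Set.Ioo (0:ℝ) 1, ENNReal.ofReal r * F r := by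
  have h1 : ∫⁻ z in ball (0:ℂ) 1, F ‖z‖ = ∫⁻ z : ℂ, ((Set.Iio (1:ℝ)).indicator F) ‖z‖ := by
    rw [← lintegral_indicator measurableSet_ball]
    congr 1
    ext z
    by_cases hz : ‖z‖ < 1
    · simp [Set.indicator, hz, mem_ball_zero_iff]
    · simp [Set.indicator, hz, mem_ball_zero_iff]
  rw [h1, lintegral_radial _ (hF.indicator measurableSet_Iio)]
  congr 1
  have h2 : ∀ r : ℝ, ENNReal.ofReal r * (Set.Iio (1:ℝ)).indicator F r
      = (Set.Iio (1:ℝ)).indicator (fun r => ENNReal.ofReal r * F r) r := by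
    intro r
    by_cases hr : r ∈ Set.Iio (1:ℝ)
    · rw [Set.indicator_of_mem hr, Set.indicator_of_mem hr]
    · rw [Set.indicator_of_notMem hr, Set.indicator_of_notMem hr, mul_zero]
  simp_rw [h2]
  rw [lintegral_indicator measurableSet_Iio, Measure.restrict_restrict measurableSet_Iio,
    Set.Iio_inter_Ioi]

/-- The radial profile of `fEx`. -/
noncomputable def gEx (b β : ℝ) (r : ℝ) : ℝ :=
  if r < 1 / 2 then 1
  else (1 / (r * (1 - r) ^ (b - β))) * Real.sin (1 / (1 - r) ^ b)

lemma measurable_gEx (b β : ℝ) : Measurable (gEx b β) := by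
  unfold gEx
  apply Measurable.ite measurableSet_Iio measurable_const
  fun_prop

lemma fEx_eq_gEx (b β : ℝ) : fEx b β = fun z => gEx b β ‖z‖ := rfl

lemma integrableOn_fEx_iff (b β : ℝ) :
    IntegrableOn (fEx b β) (ball (0:ℂ) 1) volume
      ↔ IntegrableOn (fun r => r * gEx b β r) (Set.Ioo (0:ℝ) 1) volume := by
  have hg := measurable_gEx b β
  have hmf : AEStronglyMeasurable (fEx b β) (volume.restrict (ball (0:ℂ) 1)) := by
    rw [fEx_eq_gEx]
    exact (hg.comp measurable_norm).aestronglyMeasurable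
  have hmh : AEStronglyMeasurable (fun r => r * gEx b β r)
      (volume.restrict (Set.Ioo (0:ℝ) 1)) :=
    (measurable_id.mul hg).aestronglyMeasurable
  have key : ∫⁻ z in ball (0:ℂ) 1, ENNReal.ofReal ‖fEx b β z‖
      = (2 * ENNReal.ofReal Real.pi) *
        ∫⁻ r in Set.Ioo (0:ℝ) 1, ENNReal.ofReal ‖r * gEx b β r‖ := by
    have h1 : ∫⁻ z in ball (0:ℂ) 1, ENNReal.ofReal ‖fEx b β z‖
        = ∫⁻ z in ball (0:ℂ) 1, (fun r : ℝ => ENNReal.ofReal ‖gEx b β r‖) ‖z‖ := rfl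
    rw [h1, lintegral_radial_ball _ hg.norm.ennreal_ofReal]
    congr 1
    refine setLIntegral_congr_fun measurableSet_Ioo (fun r hr => ?_)
    rw [Real.norm_eq_abs, Real.norm_eq_abs, abs_mul, abs_of_pos hr.1,
      ENNReal.ofReal_mul hr.1.le]
  constructor
  · intro h
    refine ⟨hmh, ?_⟩
    rw [hasFiniteIntegral_iff_norm]
    have h2 := h.2
    rw [hasFiniteIntegral_iff_norm, key] at h2
    have h3 := h2.ne
    have h4 : (2 * ENNReal.ofReal Real.pi) ≠ 0 :=
      mul_ne_zero (by norm_num) (ENNReal.ofReal_pos.2 Real.pi_pos).ne'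
    exact lt_top_iff_ne_top.2 fun h5 => h3 (by rw [h5, ENNReal.mul_top h4])
  · intro h
    refine ⟨hmf, ?_⟩
    rw [hasFiniteIntegral_iff_norm, key]
    exact ENNReal.mul_lt_top (ENNReal.mul_lt_top (by norm_num) ENNReal.ofReal_lt_top)
      (hasFiniteIntegral_iff_norm _ |>.1 h.2)

lemma integrable_rpow_one_sub {c : ℝ} (hc : c < 1) :
    IntegrableOn (fun r : ℝ => (1 - r) ^ (-c)) (Set.Ioo (0:ℝ) 1) volume := by
  have h1 : IntervalIntegrable (fun x : ℝ => x ^ (-c)) volume 0 1 :=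
    intervalIntegral.intervalIntegrable_rpow' (by linarith)
  have h2 := h1.comp_sub_left 1
  simp only [sub_zero, sub_self] at h2
  exact (intervalIntegrable_iff_integrableOn_Ioo_of_le zero_le_one).1 h2.symm

lemma integrable_1D (b β : ℝ) (hβ : 0 < β) (hbβ : β ≤ b) (hc : b - β < 1) :
    IntegrableOn (fun r => r * gEx b β r) (Set.Ioo (0:ℝ) 1) volume := by
  set c := b - β with hcdef
  have hc0 : 0 ≤ c := by linarith
  have hk : IntegrableOn (fun r : ℝ => 1 + (1 - r) ^ (-c)) (Set.Ioo (0:ℝ) 1) volume :=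
    (integrableOn_const measure_Ioo_lt_top.ne).add (integrable_rpow_one_sub hc)
  refine Integrable.mono hk ((measurable_id.mul (measurable_gEx b β)).aestronglyMeasurable) ?_
  filter_upwards [ae_restrict_mem measurableSet_Ioo] with r hr
  have hr0 : 0 < r := hr.1
  have hr1 : r < 1 := hr.2
  have h1r : 0 < 1 - r := by linarith
  have hXpos : (0:ℝ) < (1 - r) ^ (-c) := Real.rpow_pos_of_pos h1r _
  rw [Real.norm_eq_abs, Real.norm_eq_abs]
  have hRHS : |1 + (1 - r) ^ (-c)| = 1 + (1 - r) ^ (-c) := abs_of_pos (by linarith)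
  rw [hRHS]
  by_cases hhalf : r < 1 / 2
  · rw [gEx, if_pos hhalf, mul_one, abs_of_pos hr0]
    nlinarith
  · rw [gEx, if_neg hhalf]
    have hr2 : (1:ℝ)/2 ≤ r := by linarith [not_lt.1 hhalf]
    have hXc : (0:ℝ) < (1 - r) ^ c := Real.rpow_pos_of_pos h1r _
    have habs : |r * (1 / (r * (1 - r) ^ c) * Real.sin (1 / (1 - r) ^ b))|
        = (1 / (1 - r) ^ c) * |Real.sin (1 / (1 - r) ^ b)| := by
      rw [abs_mul, abs_mul, abs_of_pos hr0, abs_of_pos (by positivity)]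
      field_simp
    rw [habs]
    have hsin : |Real.sin (1 / (1 - r) ^ b)| ≤ 1 := Real.abs_sin_le_one _
    have : (1 / (1 - r) ^ c) * |Real.sin (1 / (1 - r) ^ b)| ≤ 1 / (1 - r) ^ c := by
      nlinarith [abs_nonneg (Real.sin (1 / (1 - r) ^ b)), one_div_pos.2 hXc]
    have heq : (1:ℝ) / (1 - r) ^ c = (1 - r) ^ (-c) := by
      rw [Real.rpow_neg h1r.le, one_div]
    linarith [heq ▸ this]

/-- Auxiliary function whose derivative is `sin²((1-r)^{-b})/(1-r)` plus a bounded term. -/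
noncomputable def auxF (b : ℝ) (r : ℝ) : ℝ :=
  -(1/2) * Real.log (1 - r) - (1/(4*b)) * (Real.sin (2 * (1 - r) ^ (-b)) * (1 - r) ^ b)

lemma hasDerivAt_auxF (b : ℝ) (hb : b ≠ 0) {r : ℝ} (hr : r < 1) :
    HasDerivAt (auxF b)
      (Real.sin ((1 - r) ^ (-b)) ^ 2 / (1 - r)
        + (1/4) * Real.sin (2 * (1 - r) ^ (-b)) * (1 - r) ^ (b - 1)) r := by
  have h1r : 0 < 1 - r := by linarith
  have hu : HasDerivAt (fun x : ℝ => 1 - x) (-1) r := by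
    simpa using (hasDerivAt_id r).const_sub 1
  have hlog : HasDerivAt (fun x : ℝ => Real.log (1 - x)) (-1 / (1 - r)) r :=
    hu.log h1r.ne'
  have hT : HasDerivAt (fun x : ℝ => (1 - x) ^ (-b)) ((-1) * (-b) * (1 - r) ^ (-b - 1)) r :=
    hu.rpow_const (Or.inl h1r.ne')
  have hsin : HasDerivAt (fun x : ℝ => Real.sin (2 * (1 - x) ^ (-b)))
      (Real.cos (2 * (1 - r) ^ (-b)) * (2 * ((-1) * (-b) * (1 - r) ^ (-b - 1)))) r :=
    (hT.const_mul 2).sin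
  have hpow : HasDerivAt (fun x : ℝ => (1 - x) ^ b) ((-1) * b * (1 - r) ^ (b - 1)) r :=
    hu.rpow_const (Or.inl h1r.ne')
  have total := (hlog.const_mul (-(1/2:ℝ))).sub ((hsin.mul hpow).const_mul (1/(4*b)))
  refine total.congr_deriv ?_
  have hP : (1 - r) ^ (-b - 1) * (1 - r) ^ b = (1 - r)⁻¹ := by
    rw [← Real.rpow_add h1r, show -b - 1 + b = (-1:ℝ) by ring, Real.rpow_neg_one]
  have hs2 : Real.sin ((1 - r) ^ (-b)) ^ 2
      = 1/2 - Real.cos (2 * ((1 - r) ^ (-b))) / 2 := by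
    rw [Real.sin_sq, Real.cos_two_mul]; ring
  set T := (1 - r) ^ (-b)
  set P1 := (1 - r) ^ (-b - 1)
  set P2 := (1 - r) ^ (b - 1)
  have key : Real.cos (2*T) * (2 * (-1 * -b * P1)) * (1-r) ^ b
      = (1-r)⁻¹ * (Real.cos (2*T) * (2*b)) := by
    calc Real.cos (2*T) * (2 * (-1 * -b * P1)) * (1-r) ^ b
        = (P1 * (1-r) ^ b) * (Real.cos (2*T) * (2*b)) := by ring
      _ = (1-r)⁻¹ * (Real.cos (2*T) * (2*b)) := by rw [hP]
  rw [hs2, key]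
  field_simp
  ring

lemma abs_mul_gEx_eq (b β : ℝ) {r : ℝ} (hr : r ∈ Set.Ioo (1/2 : ℝ) 1) :
    |r * gEx b β r| = |Real.sin ((1 - r) ^ (-b))| * (1 - r) ^ (-(b - β)) := by
  have hr0 : (0:ℝ) < r := lt_trans (by norm_num) hr.1
  have h1r : (0:ℝ) < 1 - r := by linarith [hr.2]
  have harg : 1 / (1 - r) ^ b = (1 - r) ^ (-b) := by
    rw [Real.rpow_neg h1r.le, one_div]
  rw [gEx, if_neg (not_lt.2 hr.1.le), harg]
  have hXc : (0:ℝ) < (1 - r) ^ (b - β) := Real.rpow_pos_of_pos h1r _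
  rw [abs_mul, abs_mul, abs_of_pos hr0, abs_of_pos (show (0:ℝ) < 1 / (r * (1-r)^(b-β)) by positivity),
    Real.rpow_neg h1r.le]
  field_simp
  have hcol : (1 - r) ^ (β - b) * (1 - r) ^ (b - β) = 1 := by
    rw [← Real.rpow_add h1r]; norm_num
  have hcol2 : (1 - r) ^ (b - β) * (1 - r) ^ (-(b - β)) = 1 := by
    rw [← Real.rpow_add h1r]; norm_num
  linear_combination (-|Real.sin (1 / (1 - r) ^ b)|) * hcol2

lemma not_integrable_1D (b β : ℝ) (hβ : 0 < β) (hc : 1 ≤ b - β) :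
    ¬ IntegrableOn (fun r => r * gEx b β r) (Set.Ioo (0:ℝ) 1) volume := by
  intro hint
  have hb1 : 1 < b := by linarith
  have hb0 : b ≠ 0 := by linarith
  set G := fun r : ℝ => |r * gEx b β r| + 1 with hGdef
  have hGint : IntegrableOn G (Set.Ioo (1/2:ℝ) 1) volume :=
    ((hint.mono_set (Set.Ioo_subset_Ioo (by norm_num) le_rfl)).abs).add
      (integrableOn_const measure_Ioo_lt_top.ne)
  have hk : Set.Ioo (1/2:ℝ) 1 ∈ 𝓝[<] (1:ℝ) :=
    Ioo_mem_nhdsLT_of_mem (by norm_num)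
  have hd : ∀ᶠ x in 𝓝[<] (1:ℝ), DifferentiableAt ℝ (auxF b) x := by
    filter_upwards [self_mem_nhdsWithin] with r hr
    exact (hasDerivAt_auxF b hb0 hr).differentiableAt
  have hf : Tendsto (fun x => ‖auxF b x‖) (𝓝[<] (1:ℝ)) atTop := by
    have h1 : Tendsto (fun r : ℝ => 1 - r) (𝓝[<] (1:ℝ)) (𝓝[>] (0:ℝ)) := by
      apply tendsto_nhdsWithin_of_tendsto_nhds_of_eventually_within
      · have : Tendsto (fun r : ℝ => 1 - r) (𝓝 (1:ℝ)) (𝓝 (1 - 1)) :=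
          (continuous_const.sub continuous_id).tendsto 1
        simpa using this.mono_left nhdsWithin_le_nhds
      · filter_upwards [self_mem_nhdsWithin] with r hr
        simpa using hr
    have h2 : Tendsto (fun r : ℝ => Real.log (1 - r)) (𝓝[<] (1:ℝ)) atBot :=
      Real.tendsto_log_nhdsGT_zero.comp h1
    have h3 : Tendsto (fun r : ℝ => -(1/2) * Real.log (1 - r)) (𝓝[<] (1:ℝ)) atTop := by
      exact h2.const_mul_atBot_of_neg (by norm_num)
    have h4 : Tendsto (fun r : ℝ => -(1/2) * Real.log (1 - r) - 1/(4*b)) (𝓝[<] (1:ℝ)) atTop :=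
      tendsto_atTop_add_const_right _ _ h3
    refine tendsto_atTop_mono' _ ?_ h4
    filter_upwards [hk] with r hr
    have h1r : (0:ℝ) < 1 - r := by linarith [hr.2]
    have hb' : (0:ℝ) < 4 * b := by linarith
    have hbnd : |Real.sin (2 * (1 - r) ^ (-b)) * (1 - r) ^ b| ≤ 1 := by
      rw [abs_mul]
      have h5 : |(1 - r) ^ b| ≤ 1 := by
        rw [abs_of_pos (Real.rpow_pos_of_pos h1r b)]
        exact Real.rpow_le_one h1r.le (by linarith [hr.1]) (by linarith)
      nlinarith [Real.abs_sin_le_one (2 * (1 - r) ^ (-b)), abs_nonneg ((1-r)^b),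
        abs_nonneg (Real.sin (2 * (1 - r) ^ (-b)))]
    have : -(1/(4*b)) * (Real.sin (2 * (1 - r) ^ (-b)) * (1 - r) ^ b) ≥ -(1/(4*b)) := by
      have h6 : (0:ℝ) < 1/(4*b) := by positivity
      obtain ⟨hX1, hX2⟩ := abs_le.1 hbnd
      nlinarith
    rw [Real.norm_eq_abs]
    calc -(1/2) * Real.log (1 - r) - 1/(4*b)
        ≤ -(1/2) * Real.log (1 - r) + (-(1/(4*b)) * (Real.sin (2 * (1 - r) ^ (-b)) * (1 - r) ^ b)) := by
          linarith
      _ = auxF b r := by rw [auxF]; ring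
      _ ≤ |auxF b r| := le_abs_self _
  have hfg : deriv (auxF b) =O[𝓝[<] (1:ℝ)] G := by
    rw [Asymptotics.isBigO_iff]
    refine ⟨1, ?_⟩
    filter_upwards [hk] with r hr
    have h1r : (0:ℝ) < 1 - r := by linarith [hr.2]
    rw [(hasDerivAt_auxF b hb0 hr.2).deriv]
    have habs := abs_mul_gEx_eq b β hr
    have hGpos : (0:ℝ) ≤ |r * gEx b β r| := abs_nonneg _
    have hsin1 : |Real.sin ((1 - r) ^ (-b))| ≤ 1 := Real.abs_sin_le_one _
    -- main bound
    have hT1 : Real.sin ((1 - r) ^ (-b)) ^ 2 / (1 - r)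
        ≤ |Real.sin ((1 - r) ^ (-b))| * (1 - r) ^ (-(b - β)) := by
      have e1 : Real.sin ((1 - r) ^ (-b)) ^ 2 / (1 - r)
          = (|Real.sin ((1 - r) ^ (-b))| * |Real.sin ((1 - r) ^ (-b))|) * (1 - r)⁻¹ := by
        rw [abs_mul_abs_self, div_eq_mul_inv, pow_two]
      rw [e1]
      have e2 : (1 - r)⁻¹ = (1 - r) ^ (-1 : ℝ) := (Real.rpow_neg_one _).symm
      have e3 : (1 - r) ^ (-1 : ℝ) ≤ (1 - r) ^ (-(b - β)) :=
        Real.rpow_le_rpow_of_exponent_ge h1r (by linarith [hr.1]) (by linarith)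
      have e4 : (0:ℝ) ≤ (1 - r)⁻¹ := by positivity
      have e5 : |Real.sin ((1 - r) ^ (-b))| * |Real.sin ((1 - r) ^ (-b))|
          ≤ |Real.sin ((1 - r) ^ (-b))| := by
        nlinarith [abs_nonneg (Real.sin ((1 - r) ^ (-b)))]
      calc (|Real.sin ((1 - r) ^ (-b))| * |Real.sin ((1 - r) ^ (-b))|) * (1 - r)⁻¹
          ≤ |Real.sin ((1 - r) ^ (-b))| * (1 - r)⁻¹ :=
            mul_le_mul_of_nonneg_right e5 e4
        _ ≤ |Real.sin ((1 - r) ^ (-b))| * (1 - r) ^ (-(b - β)) := by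
            rw [e2]
            exact mul_le_mul_of_nonneg_left e3 (abs_nonneg _)
    have hT2 : |(1/4) * Real.sin (2 * (1 - r) ^ (-b)) * (1 - r) ^ (b - 1)| ≤ 1 := by
      rw [abs_mul, abs_mul]
      have h5 : |(1 - r) ^ (b - 1)| ≤ 1 := by
        rw [abs_of_pos (Real.rpow_pos_of_pos h1r _)]
        exact Real.rpow_le_one h1r.le (by linarith [hr.1]) (by linarith)
      have := Real.abs_sin_le_one (2 * (1 - r) ^ (-b))
      have h14 : |(1/4 : ℝ)| = 1/4 := by norm_num
      rw [h14]
      nlinarith [abs_nonneg (Real.sin (2 * (1 - r) ^ (-b))), abs_nonneg ((1-r)^(b-1))]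
    rw [Real.norm_eq_abs, Real.norm_eq_abs, one_mul]
    have hsq : (0:ℝ) ≤ Real.sin ((1 - r) ^ (-b)) ^ 2 / (1 - r) := by positivity
    have hGabs : |G r| = |r * gEx b β r| + 1 := by
      rw [hGdef]; exact abs_of_nonneg (by positivity)
    rw [hGabs]
    calc |Real.sin ((1 - r) ^ (-b)) ^ 2 / (1 - r)
          + (1/4) * Real.sin (2 * (1 - r) ^ (-b)) * (1 - r) ^ (b - 1)|
        ≤ Real.sin ((1 - r) ^ (-b)) ^ 2 / (1 - r)
          + |(1/4) * Real.sin (2 * (1 - r) ^ (-b)) * (1 - r) ^ (b - 1)| := by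
          calc |Real.sin ((1 - r) ^ (-b)) ^ 2 / (1 - r)
                + (1/4) * Real.sin (2 * (1 - r) ^ (-b)) * (1 - r) ^ (b - 1)|
              ≤ |Real.sin ((1 - r) ^ (-b)) ^ 2 / (1 - r)|
                + |(1/4) * Real.sin (2 * (1 - r) ^ (-b)) * (1 - r) ^ (b - 1)| := abs_add_le _ _
            _ = _ := by rw [abs_of_nonneg hsq]
      _ ≤ |Real.sin ((1 - r) ^ (-b))| * (1 - r) ^ (-(b - β)) + 1 := by linarith
      _ = |r * gEx b β r| + 1 := by rw [habs]
  exact not_integrableOn_of_tendsto_norm_atTop_of_deriv_isBigO_filter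
    (𝓝[<] (1:ℝ)) hk hd hf hfg hGint

lemma unitDisc_eq_ball : unitDisc = ball (0:ℂ) 1 := by
  ext z; simp [unitDisc, mem_ball_zero_iff]

lemma dA_pi_ne_zero : (ENNReal.ofReal Real.pi)⁻¹ ≠ 0 :=
  ENNReal.inv_ne_zero.2 ENNReal.ofReal_ne_top

lemma dA_pi_ne_top : (ENNReal.ofReal Real.pi)⁻¹ ≠ ⊤ :=
  ENNReal.inv_ne_top.2 (ENNReal.ofReal_pos.2 Real.pi_pos).ne'

lemma integrableOn_dA_iff {f : ℂ → ℝ} {s : Set ℂ} :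
    IntegrableOn f s dA ↔ IntegrableOn f s volume := by
  rw [IntegrableOn, IntegrableOn, dA, Measure.restrict_smul]
  exact integrable_smul_measure dA_pi_ne_zero dA_pi_ne_top

lemma fEx_bound (b β : ℝ) (hbβ : β ≤ b) {R : ℝ} (hR : R < 1) {z : ℂ} (hz : ‖z‖ ≤ R) :
    |fEx b β z| ≤ max 1 (2 * ((1 - R) ^ (b - β))⁻¹) := by
  have h1R : 0 < 1 - R := by linarith
  by_cases hhalf : ‖z‖ < 1/2
  · rw [fEx, if_pos hhalf]
    simpa using le_max_left 1 (2 * ((1 - R) ^ (b - β))⁻¹)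
  · rw [fEx, if_neg hhalf]
    push_neg at hhalf
    have hz0 : (0:ℝ) < ‖z‖ := by linarith
    have h1z : 0 < 1 - ‖z‖ := by linarith [lt_of_le_of_lt hz hR]
    have hX : (0:ℝ) < (1 - ‖z‖) ^ (b - β) := Real.rpow_pos_of_pos h1z _
    have hXR : (0:ℝ) < (1 - R) ^ (b - β) := Real.rpow_pos_of_pos h1R _
    have hXle : (1 - R) ^ (b - β) ≤ (1 - ‖z‖) ^ (b - β) :=
      Real.rpow_le_rpow h1R.le (by linarith) (by linarith)
    have hbd : |(1 / (‖z‖ * (1 - ‖z‖) ^ (b - β))) * Real.sin (1 / (1 - ‖z‖) ^ b)|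
        ≤ 1 / (‖z‖ * (1 - ‖z‖) ^ (b - β)) := by
      rw [abs_mul, abs_of_pos (show (0:ℝ) < 1 / (‖z‖ * (1 - ‖z‖) ^ (b - β)) by positivity)]
      nlinarith [Real.abs_sin_le_one (1 / (1 - ‖z‖) ^ b),
        abs_nonneg (Real.sin (1 / (1 - ‖z‖) ^ b)),
        one_div_pos.2 (show (0:ℝ) < ‖z‖ * (1 - ‖z‖) ^ (b - β) by positivity)]
    refine le_trans hbd (le_trans ?_ (le_max_right _ _))
    rw [div_le_iff₀ (by positivity)]
    have : (1 - R) ^ (b - β) ≤ 2 * (‖z‖ * (1 - ‖z‖) ^ (b - β)) := by nlinarith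
    calc (1:ℝ) = ((1 - R) ^ (b - β))⁻¹ * ((1 - R) ^ (b - β)) := by
          field_simp
      _ ≤ ((1 - R) ^ (b - β))⁻¹ * (2 * (‖z‖ * (1 - ‖z‖) ^ (b - β))) := by
          apply mul_le_mul_of_nonneg_left this (by positivity)
      _ = 2 * ((1 - R) ^ (b - β))⁻¹ * (‖z‖ * (1 - ‖z‖) ^ (b - β)) := by ring

lemma locInt (b β : ℝ) (hbβ : β ≤ b) : LocallyIntegrableOn (fEx b β) unitDisc dA := by
  intro x hx
  have hx1 : ‖x‖ < 1 := hx
  set ε := (1 - ‖x‖)/2 with hε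
  have hε0 : 0 < ε := by simp only [hε]; linarith
  refine ⟨closedBall x ε, mem_nhdsWithin_of_mem_nhds (closedBall_mem_nhds x hε0), ?_⟩
  set R := ‖x‖ + ε with hR
  have hR1 : R < 1 := by simp only [hR, hε]; linarith
  have hmeas : AEStronglyMeasurable (fEx b β) dA :=
    ((measurable_gEx b β).comp measurable_norm).aestronglyMeasurable
  have hfin : dA (closedBall x ε) < ⊤ := by
    rw [dA, Measure.smul_apply, smul_eq_mul]
    exact ENNReal.mul_lt_top dA_pi_ne_top.lt_top measure_closedBall_lt_top
  refine Measure.integrableOn_of_bounded (M := max 1 (2 * ((1 - R) ^ (b - β))⁻¹)) hfin.ne hmeas ?_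
  filter_upwards [ae_restrict_mem measurableSet_closedBall] with z hz
  have hzR : ‖z‖ ≤ R := by
    have h1 := mem_closedBall.1 hz
    calc ‖z‖ ≤ ‖x‖ + ‖z - x‖ := norm_le_insert' z x
      _ ≤ ‖x‖ + ε := by rw [← dist_eq_norm]; linarith [h1]
  rw [Real.norm_eq_abs]
  exact fEx_bound b β hbβ hR1 hzR

theorem example_integrability (b β : ℝ) (hβ : 0 < β) (hbβ : β ≤ b) :
    (MeasureTheory.IntegrableOn (fEx b β) unitDisc dA ↔ b - β < 1) ∧
    MeasureTheory.LocallyIntegrableOn (fEx b β) unitDisc dA := by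
  refine ⟨?_, locInt b β hbβ⟩
  rw [unitDisc_eq_ball, integrableOn_dA_iff, integrableOn_fEx_iff]
  constructor
  · intro h
    by_contra hc
    exact not_integrable_1D b β hβ (by linarith) h
  · intro h
    exact integrable_1D b β hβ hbβ h

end ExampleIntegrabilityAux

/-- For `b ≥ β > 0`, the example symbol `f = fEx b β` is integrable on
`𝔻` with respect to `dA` if and only if `b - β < 1`; it is locally integrable on `𝔻`
for every choice of `b` and `β`. -/
theorem example_integrability (b β : ℝ) (hβ : 0 < β) (hbβ : β ≤ b) :
    (MeasureTheory.IntegrableOn (fEx b β) unitDisc dA ↔ b - β < 1) ∧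
    MeasureTheory.LocallyIntegrableOn (fEx b β) unitDisc dA :=
  ExampleIntegrabilityAux.example_integrability b β hβ hbβ
end
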